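/- Let α ≥ 2 be an integer, τ ∈ (0,1], and ν > 0 with ν² ≥ 5/9. Assume that α − 1 ≤ (2/3)·ν²·ln(1/(τα(1+ν²))). Then (1/(α−1))·ln( (ατ − τ + 1)(1−τ)^{α−1} + C(α,2)·(1−τ)^{α−2}·τ²·e^{1/ν²} + Σ_{j=3}^{α} C(α,j)·(1−τ)^{α−j}·τ^j·e^{j(j−1)/(2ν²)} ) ≤ 2·α·τ²/ν². (This is the quantitative core of the claim that a Gaussian mechanism with noise level ν applied to a Poisson-subsampled dataset with inclusion probability τ satisfies (α, 2τ²α/ν²)-Rényi differential privacy.) -/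

import Mathlib

open Finset

lemma desc_le_aux (a k : ℕ) : a.descFactorial (k+2) ≤ a * (a-1) * a^k := by
  induction k with
  | zero => simp [Nat.descFactorial_succ, Nat.descFactorial, Nat.mul_comm]
  | succ k ih =>
    rw [Nat.descFactorial_succ]
    calc (a - (k+2)) * a.descFactorial (k+2) ≤ a * (a*(a-1)*a^k) :=
      Nat.mul_le_mul (Nat.sub_le _ _) ih
    _ = a*(a-1)*a^(k+1) := by ring

lemma factorial_ge6 (k : ℕ) : 6 * 4^k ≤ (k+3).factorial := by
  induction k with
  | zero => simp [Nat.factorial]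
  | succ k ih =>
    calc 6*4^(k+1) = 4*(6*4^k) := by ring
    _ ≤ (k+4) * (k+3).factorial := Nat.mul_le_mul (by omega) ih
    _ = (k+3+1).factorial := (Nat.factorial_succ _).symm

lemma tail_term_bound (β i : ℕ) (τ ν : ℝ) (hτ0 : 0 < τ) (hτ1 : τ ≤ 1)
    (hν2 : 0 < ν^2) (hν : 5/9 ≤ ν^2)
    (hq : ((β:ℝ)+2)*τ ≤ Real.exp (-(3*((β:ℝ)+1)/(2*ν^2))) / (1+ν^2))
    (hi : i < β) :
    ((β+2).choose (3+i) : ℝ) * (1-τ)^(β+2-(3+i)) * τ^(3+i) *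
      Real.exp (((3+i:ℕ):ℝ)*(((3+i:ℕ):ℝ)-1)/(2*ν^2))
    ≤ (((β:ℝ)+2)*((β:ℝ)+1)*τ^2/(6*ν^2)) * (9/56)^i := by
  have h1τ : (0:ℝ) ≤ 1 - τ := by linarith
  set y : ℝ := 3*((β:ℝ)+1)/(2*ν^2) with hy
  have hfact : (0:ℝ) < ((3+i).factorial : ℝ) := by positivity
  have hch : ((β+2).choose (3+i) : ℝ) ≤
      ((β:ℝ)+2)*((β:ℝ)+1)*((β:ℝ)+2)^(i+1) / ((3+i).factorial : ℝ) := by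
    have h1 : (3+i).factorial * (β+2).choose (3+i) ≤ (β+2)*(β+1)*(β+2)^(i+1) := by
      have h2 := desc_le_aux (β+2) (i+1)
      rw [Nat.descFactorial_eq_factorial_mul_choose] at h2
      have e1 : i+1+2 = 3+i := by omega
      have e2 : β+2-1 = β+1 := by omega
      rw [e1, e2] at h2
      exact h2
    rw [le_div_iff₀ hfact]
    calc ((β+2).choose (3+i) : ℝ) * ((3+i).factorial : ℝ)
        = (((3+i).factorial * (β+2).choose (3+i) : ℕ) : ℝ) := by push_cast; ring
      _ ≤ (((β+2)*(β+1)*(β+2)^(i+1) : ℕ) : ℝ) := by exact_mod_cast Nat.cast_le.mpr h1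
      _ = ((β:ℝ)+2)*((β:ℝ)+1)*((β:ℝ)+2)^(i+1) := by push_cast; ring
  have hpow1 : (1-τ)^(β+2-(3+i)) ≤ 1 := pow_le_one₀ h1τ (by linarith)
  have hiβ : (i:ℝ)+1 ≤ (β:ℝ) := by exact_mod_cast Nat.succ_le_of_lt hi
  set e3 : ℝ := ((3+i:ℕ):ℝ)*(((3+i:ℕ):ℝ)-1)/(2*ν^2) with he3
  have hh : (Real.exp (-y))^(i+1) * Real.exp e3 = Real.exp (((i+1:ℕ):ℝ)*(-y) + e3) := by
    rw [← Real.exp_nat_mul, ← Real.exp_add]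
  calc ((β+2).choose (3+i) : ℝ) * (1-τ)^(β+2-(3+i)) * τ^(3+i) * Real.exp e3
      ≤ (((β:ℝ)+2)*((β:ℝ)+1)*((β:ℝ)+2)^(i+1) / ((3+i).factorial : ℝ)) * 1 * τ^(3+i) *
        Real.exp e3 := by gcongr
    _ = (((β:ℝ)+2)*((β:ℝ)+1)*τ^2 / ((3+i).factorial : ℝ)) * ((((β:ℝ)+2)*τ)^(i+1)) *
        Real.exp e3 := by rw [mul_pow]; ring
    _ ≤ (((β:ℝ)+2)*((β:ℝ)+1)*τ^2 / ((3+i).factorial : ℝ)) *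
        ((Real.exp (-y)/(1+ν^2))^(i+1)) * Real.exp e3 := by
        gcongr
    _ = (((β:ℝ)+2)*((β:ℝ)+1)*τ^2) * (1/((3+i).factorial : ℝ)) *
        ((1/(1+ν^2)) * (1/(1+ν^2))^i) * Real.exp (((i+1:ℕ):ℝ)*(-y) + e3) := by
        rw [div_pow, ← hh]; field_simp
        have hk : ((1+ν^2)⁻¹)^i * (1+ν^2)^i = 1 := by
          rw [← mul_pow, inv_mul_cancel₀ (by positivity), one_pow]
        linear_combination (-(ν^2+1)) * hk
    _ ≤ (((β:ℝ)+2)*((β:ℝ)+1)*τ^2) * (1/((3+i).factorial : ℝ)) *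
        ((1/(1+ν^2)) * (1/(1+ν^2))^i) * 1 := by
        gcongr
        rw [Real.exp_le_one_iff]
        have hnum : (3+(i:ℝ))*((3+(i:ℝ))-1) ≤ 3*((i:ℝ)+1)*((β:ℝ)+1) := by
          nlinarith [Nat.cast_nonneg (α := ℝ) i, mul_nonneg (sub_nonneg.2 hiβ) (Nat.cast_nonneg (α := ℝ) i)]
        have hc1 : ((i+1:ℕ):ℝ) = (i:ℝ)+1 := by push_cast; ring
        have hc2 : ((3+i:ℕ):ℝ) = 3+(i:ℝ) := by push_cast; ring
        rw [hc1, he3, hc2, hy]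
        have heq : ((i:ℝ)+1) * (-(3*((β:ℝ)+1)/(2*ν^2))) + (3+(i:ℝ))*((3+(i:ℝ))-1)/(2*ν^2)
            = ((3+(i:ℝ))*((3+(i:ℝ))-1) - 3*((i:ℝ)+1)*((β:ℝ)+1))/(2*ν^2) := by ring
        rw [heq]
        apply div_nonpos_of_nonpos_of_nonneg (by linarith) (by positivity)
    _ ≤ (((β:ℝ)+2)*((β:ℝ)+1)*τ^2) * ((1/6)*(1/4:ℝ)^i) * ((1/ν^2)*(9/14:ℝ)^i) * 1 := by
        have hf : (1:ℝ)/((3+i).factorial : ℝ) ≤ (1/6)*(1/4:ℝ)^i := by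
          have h1 : ((6*4^i : ℕ):ℝ) ≤ ((3+i).factorial : ℝ) := by
            exact_mod_cast Nat.cast_le.mpr (by rw [Nat.add_comm 3 i]; exact factorial_ge6 i)
          have h2 : (0:ℝ) < ((6*4^i : ℕ):ℝ) := by positivity
          calc (1:ℝ)/((3+i).factorial : ℝ) ≤ 1/((6*4^i : ℕ):ℝ) := by
                apply one_div_le_one_div_of_le h2 h1
            _ = (1/6)*(1/4:ℝ)^i := by push_cast; field_simp; rw [← mul_pow]; norm_num
        have hq1 : (1:ℝ)/(1+ν^2) ≤ 1/ν^2 := by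
          apply one_div_le_one_div_of_le hν2 (by linarith)
        have hq2 : ((1:ℝ)/(1+ν^2))^i ≤ (9/14:ℝ)^i := by
          apply pow_le_pow_left₀ (by positivity)
          rw [div_le_div_iff₀ (by positivity) (by norm_num)]
          linarith
        gcongr
    _ = (((β:ℝ)+2)*((β:ℝ)+1)*τ^2/(6*ν^2)) * ((9/56:ℝ)^i) := by
        rw [show ((9:ℝ)/56)^i = (1/4:ℝ)^i * (9/14:ℝ)^i by rw [← mul_pow]; norm_num]
        ring

lemma exp_le_lin {t : ℝ} (h0 : 0 ≤ t) (h2 : t ≤ 2) :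
    Real.exp t ≤ 1 + t * (Real.exp 2 - 1) / 2 := by
  have ha : (0:ℝ) ≤ 1 - t/2 := by linarith
  have hb : (0:ℝ) ≤ t/2 := by linarith
  have h := convexOn_exp.2 (Set.mem_univ (0:ℝ)) (Set.mem_univ (2:ℝ)) ha hb (by ring)
  simp only [smul_eq_mul, mul_zero, zero_add, Real.exp_zero] at h
  have e : (t/2) * 2 = t := by ring
  rw [e] at h
  linarith

lemma geom_bound (n : ℕ) : ∑ k ∈ range n, ((9:ℝ)/56)^k ≤ 56/47 := by
  rw [geom_sum_eq (by norm_num)]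
  have h : (0:ℝ) ≤ (9/56:ℝ)^n := by positivity
  rw [div_le_iff_of_neg (by norm_num)]
  linarith


set_option maxHeartbeats 1000000 in
open Finset in
/-- Quantitative core of the RDP bound for the Gaussian mechanism with
Poisson subsampling: under the stated conditions on `α`, `τ`, `ν`,
the Rényi divergence bound is at most `2·α·τ²/ν²`. -/
theorem rdp_poisson_subsampling_bound (α : ℕ) (hα : 2 ≤ α) (τ ν : ℝ)
    (hτ0 : 0 < τ) (hτ1 : τ ≤ 1) (hν0 : 0 < ν) (hν : 5 / 9 ≤ ν ^ 2)
    (hcond : (α : ℝ) - 1 ≤ 2 / 3 * ν ^ 2 * Real.log (1 / (τ * α * (1 + ν ^ 2)))) :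
    (1 / ((α : ℝ) - 1)) * Real.log
      (((α : ℝ) * τ - τ + 1) * (1 - τ) ^ (α - 1)
        + (α.choose 2 : ℝ) * (1 - τ) ^ (α - 2) * τ ^ 2 * Real.exp (1 / ν ^ 2)
        + ∑ j ∈ Icc 3 α, (α.choose j : ℝ) * (1 - τ) ^ (α - j) * τ ^ j *
            Real.exp ((j : ℝ) * ((j : ℝ) - 1) / (2 * ν ^ 2)))
      ≤ 2 * α * τ ^ 2 / ν ^ 2 := by
  obtain ⟨β, rfl⟩ : ∃ β, α = β + 2 := ⟨α - 2, by omega⟩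
  have hν2 : (0:ℝ) < ν ^ 2 := by positivity
  have h1τ : (0:ℝ) ≤ 1 - τ := by linarith
  have hβ0 : (0:ℝ) ≤ (β:ℝ) := Nat.cast_nonneg β
  have hcast : ((β+2:ℕ):ℝ) = (β:ℝ)+2 := by push_cast; ring
  rw [hcast] at hcond ⊢
  rw [show β+2-1 = β+1 by omega, show β+2-2 = β by omega,
    show (β:ℝ)+2-1 = (β:ℝ)+1 by ring]
  set y : ℝ := 3*((β:ℝ)+1)/(2*ν^2) with hy
  -- step 1: the product bound
  have hP0 : (0:ℝ) < τ * ((β:ℝ)+2) * (1+ν^2) := by positivity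
  have hq : ((β:ℝ)+2)*τ ≤ Real.exp (-y) / (1+ν^2) := by
    have hlog : Real.log (τ*((β:ℝ)+2)*(1+ν^2)) ≤ -y := by
      rw [one_div, Real.log_inv] at hcond
      rw [hy, neg_div', le_div_iff₀ (by positivity)]
      nlinarith [hcond]
    rw [le_div_iff₀ (by positivity)]
    calc ((β:ℝ)+2)*τ*(1+ν^2) = τ*((β:ℝ)+2)*(1+ν^2) := by ring
    _ ≤ Real.exp (-y) := by
        rw [← Real.exp_log hP0]; exact Real.exp_le_exp.mpr hlog
  -- binomial identity and sum splitting
  have hbin : ∑ j ∈ range (β+2+1), ((β+2).choose j : ℝ)*(1-τ)^(β+2-j)*τ^j = 1 := by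
    have h := add_pow τ (1-τ) (β+2)
    rw [show τ + (1-τ) = (1:ℝ) by ring, one_pow] at h
    exact (Finset.sum_congr rfl (fun j hj => by ring)).trans h.symm
  have hsplit : ∑ j ∈ range (β+2+1), ((β+2).choose j : ℝ)*(1-τ)^(β+2-j)*τ^j
      = (1-τ)^(β+2) + ((β:ℝ)+2)*(1-τ)^(β+1)*τ + ((β+2).choose 2 : ℝ)*(1-τ)^β*τ^2
        + ∑ j ∈ Icc 3 (β+2), ((β+2).choose j : ℝ)*(1-τ)^(β+2-j)*τ^j := by
    rw [← Finset.sum_range_add_sum_Ico _ (show 3 ≤ β+2+1 by omega)]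
    rw [Finset.sum_range_succ, Finset.sum_range_succ, Finset.sum_range_one, Finset.Ico_add_one_right_eq_Icc]
    rw [show β+2-1 = β+1 by omega, show β+2-2 = β by omega]
    simp only [Nat.choose_zero_right, Nat.choose_one_right, pow_zero, pow_one,
      Nat.sub_zero, Nat.cast_one, hcast]
    ring
  have hone : (1-τ)^(β+2) + ((β:ℝ)+2)*(1-τ)^(β+1)*τ + ((β+2).choose 2 : ℝ)*(1-τ)^β*τ^2
      + ∑ j ∈ Icc 3 (β+2), ((β+2).choose j : ℝ)*(1-τ)^(β+2-j)*τ^j = 1 := by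
    rw [← hsplit, hbin]
  -- continue
  set X := Real.exp (1/ν^2) with hXdef
  set A := ∑ j ∈ Icc 3 (β+2), ((β+2).choose j : ℝ)*(1-τ)^(β+2-j)*τ^j with hAdef
  set T := ∑ j ∈ Icc 3 (β+2), ((β+2).choose j : ℝ)*(1-τ)^(β+2-j)*τ^j *
      Real.exp ((j:ℝ)*((j:ℝ)-1)/(2*ν^2)) with hTdef
  have hc2cast : (((β+2).choose 2 : ℕ) : ℝ) = ((β:ℝ)+2)*((β:ℝ)+1)/2 := by
    rw [Nat.cast_choose_two]; push_cast; ring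
  have hX1 : 1 ≤ X := Real.one_le_exp (by positivity)
  have hA0 : 0 ≤ A := Finset.sum_nonneg (fun j hj => by positivity)
  have hAT : A ≤ T := by
    apply Finset.sum_le_sum
    intro j hj
    have hj3 : 3 ≤ j := (Finset.mem_Icc.mp hj).1
    have hj3R : (3:ℝ) ≤ (j:ℝ) := by exact_mod_cast hj3
    have h1 : (1:ℝ) ≤ Real.exp ((j:ℝ)*((j:ℝ)-1)/(2*ν^2)) := by
      apply Real.one_le_exp
      apply div_nonneg (by nlinarith) (by positivity)
    exact le_mul_of_one_le_right (by positivity) h1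
  have hTle : T ≤ (((β:ℝ)+2)*((β:ℝ)+1)*τ^2/(6*ν^2)) * (56/47) := by
    rw [hTdef, ← Finset.Ico_add_one_right_eq_Icc, Finset.sum_Ico_eq_sum_range,
      show β+2+1-3 = β by omega]
    refine le_trans (Finset.sum_le_sum fun i hi =>
      tail_term_bound β i τ ν hτ0 hτ1 hν2 hν hq (Finset.mem_range.mp hi)) ?_
    rw [← Finset.mul_sum]
    exact mul_le_mul_of_nonneg_left (geom_bound β) (by positivity)
  have hXle : X - 1 ≤ (1/ν^2) * (Real.exp 2 - 1) / 2 := by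
    have ht2 : (1:ℝ)/ν^2 ≤ 2 := by
      rw [div_le_iff₀ hν2]; nlinarith
    have h := exp_le_lin (t := 1/ν^2) (by positivity) ht2
    rw [hXdef]
    linarith
  have he2 : Real.exp 2 ≤ 7.39 := by
    have h1 : Real.exp 2 = Real.exp 1 * Real.exp 1 := by rw [← Real.exp_add]; norm_num
    nlinarith [Real.exp_one_lt_d9, Real.exp_pos 1]
  have hc2pos : (0:ℝ) ≤ ((β+2).choose 2 : ℝ)*(1-τ)^β*τ^2 := by positivity
  have hKpos : (0:ℝ) ≤ ((β:ℝ)+2)*((β:ℝ)+1)*τ^2/ν^2 := by positivity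
  set S := (((β:ℝ)+2)*τ - τ + 1)*(1-τ)^(β+1) + ((β+2).choose 2 : ℝ)*(1-τ)^β*τ^2*X + T with hSdef
  have hSeq : S = 1 + (((β+2).choose 2 : ℝ)*(1-τ)^β*τ^2)*(X-1) + (T - A) := by
    rw [hSdef]
    linear_combination hone
  have hb1 : (((β+2).choose 2 : ℝ)*(1-τ)^β*τ^2)*(X-1)
      ≤ (((β:ℝ)+2)*((β:ℝ)+1)/2*τ^2) * ((1/ν^2)*(Real.exp 2 - 1)/2) := by
    apply mul_le_mul _ (by linarith) (by linarith) (by positivity)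
    calc ((β+2).choose 2 : ℝ)*(1-τ)^β*τ^2 ≤ ((β+2).choose 2 : ℝ)*1*τ^2 := by
          gcongr
          exact pow_le_one₀ h1τ (by linarith)
      _ = ((β:ℝ)+2)*((β:ℝ)+1)/2*τ^2 := by rw [hc2cast]; ring
  have hcoef : (((β:ℝ)+2)*((β:ℝ)+1)/2*τ^2) * ((1/ν^2)*(Real.exp 2 - 1)/2)
      + (((β:ℝ)+2)*((β:ℝ)+1)*τ^2/(6*ν^2)) * (56/47)
      ≤ ((β:ℝ)+1) * (2*((β:ℝ)+2)*τ^2/ν^2) := by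
    have h1 : (Real.exp 2 - 1)/4 + 28/141 ≤ 2 := by nlinarith [he2]
    calc (((β:ℝ)+2)*((β:ℝ)+1)/2*τ^2) * ((1/ν^2)*(Real.exp 2 - 1)/2)
        + (((β:ℝ)+2)*((β:ℝ)+1)*τ^2/(6*ν^2)) * (56/47)
        = (((β:ℝ)+2)*((β:ℝ)+1)*τ^2/ν^2) * ((Real.exp 2 - 1)/4 + 28/141) := by ring
      _ ≤ (((β:ℝ)+2)*((β:ℝ)+1)*τ^2/ν^2) * 2 := mul_le_mul_of_nonneg_left h1 hKpos
      _ = ((β:ℝ)+1) * (2*((β:ℝ)+2)*τ^2/ν^2) := by ring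
  have hlin : S ≤ 1 + ((β:ℝ)+1) * (2*((β:ℝ)+2)*τ^2/ν^2) := by
    rw [hSeq]
    linarith [hb1, hTle, hA0, hcoef]
  have hSle : S ≤ Real.exp (((β:ℝ)+1) * (2*((β:ℝ)+2)*τ^2/ν^2)) := by
    have h := Real.add_one_le_exp (((β:ℝ)+1) * (2*((β:ℝ)+2)*τ^2/ν^2))
    linarith
  have hS0 : (0:ℝ) < S := by
    rw [hSeq]
    have h1 : 0 ≤ (((β+2).choose 2:ℝ)*(1-τ)^β*τ^2)*(X-1) :=
      mul_nonneg hc2pos (by linarith)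
    linarith [hAT]
  have hlogS : Real.log S ≤ ((β:ℝ)+1) * (2*((β:ℝ)+2)*τ^2/ν^2) :=
    (Real.log_le_iff_le_exp hS0).mpr hSle
  calc 1/((β:ℝ)+1) * Real.log S
      ≤ 1/((β:ℝ)+1) * (((β:ℝ)+1) * (2*((β:ℝ)+2)*τ^2/ν^2)) :=
        mul_le_mul_of_nonneg_left hlogS (by positivity)
    _ = 2*((β:ℝ)+2)*τ^2/ν^2 := by
        have hβ1 : ((β:ℝ)+1) ≠ 0 := by positivity
        field_simp
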